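/- Let $W_h = \begin{pmatrix} w_{ee} & w_{ei} \\ w_{ie} & w_{ii} \end{pmatrix}$ with $w_{ee}, w_{ie} > 0$, $w_{ei}, w_{ii} < 0$, $F_e, F_i > 0$, and suppose the balance condition $F_e/F_i > w_{ei}/w_{ii} > w_{ee}/w_{ie}$ holds. Let $0 < c_{in} < 1$ and $0 < c_{out} \le 1$ satisfy $c_{out} > c_{in}(2 - c_{out})$. Then the balance equation $W r + F = 0$, with $W = \tfrac{1}{2}\begin{pmatrix} (1-c_{in}) W_h & (1-c_{in}) W_h \\ (1+c_{in})(1-c_{out}) W_h & (1+c_{in})(1+c_{out}) W_h \end{pmatrix}$ and $F = (F_e, F_i, F_e, F_i)$, has a unique solution $r \in \mathbb{R}^4$, and all four components of $r$ are positive; i.e., heterogeneous out-degrees correlated with in-degrees restore the balanced state. -/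

import Mathlib

set_option maxHeartbeats 1000000


/-- When the homogeneous balance condition holds and cout > cin (2 - cout),
the balance equation of the correlated heterogeneous-degree network has a
unique solution and all four rates are positive. -/
theorem heterogeneous_out_degrees_restore_balance
    (wee wei wie wii Fe Fi : ℝ)
    (hwee : 0 < wee) (hwie : 0 < wie) (hwei : wei < 0) (hwii : wii < 0)
    (hFe : 0 < Fe) (hFi : 0 < Fi)
    (hbal₁ : Fe / Fi > wei / wii) (hbal₂ : wei / wii > wee / wie)
    (cin cout : ℝ) (hcin0 : 0 < cin) (hcin1 : cin < 1)
    (hcout0 : 0 < cout) (hcout1 : cout ≤ 1)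
    (hc : cout > cin * (2 - cout))
    (Wh : Matrix (Fin 2) (Fin 2) ℝ) (hWh : Wh = !![wee, wei; wie, wii])
    (W : Matrix (Fin 2 ⊕ Fin 2) (Fin 2 ⊕ Fin 2) ℝ)
    (hW : W = (1 / 2 : ℝ) • Matrix.fromBlocks
      ((1 - cin) • Wh) ((1 - cin) • Wh)
      (((1 + cin) * (1 - cout)) • Wh) (((1 + cin) * (1 + cout)) • Wh)) :
    (∃! r : Fin 2 ⊕ Fin 2 → ℝ,
      W.mulVec r + Sum.elim ![Fe, Fi] ![Fe, Fi] = 0) ∧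
    ∀ r : Fin 2 ⊕ Fin 2 → ℝ,
      W.mulVec r + Sum.elim ![Fe, Fi] ![Fe, Fi] = 0 → ∀ i, 0 < r i := by
  subst hWh hW
  have hwii' : wii ≠ 0 := ne_of_lt hwii
  have hwie' : wie ≠ 0 := ne_of_gt hwie
  have hFi' : Fi ≠ 0 := ne_of_gt hFi
  -- determinant is positive
  have hdet : 0 < wee * wii - wei * wie := by
    have h := mul_lt_mul_of_neg_right hbal₂ (mul_neg_of_pos_of_neg hwie hwii)
    have e1 : wee / wie * (wie * wii) = wee * wii := by field_simp
    have e2 : wei / wii * (wie * wii) = wei * wie := by field_simp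
    rw [e1, e2] at h
    linarith
  -- sign facts from balance conditions
  have hNe : wii * Fe - wei * Fi < 0 := by
    have h := mul_lt_mul_of_neg_right hbal₁ (mul_neg_of_pos_of_neg hFi hwii)
    have e1 : Fe / Fi * (Fi * wii) = Fe * wii := by field_simp
    have e2 : wei / wii * (Fi * wii) = wei * Fi := by field_simp
    rw [e1, e2] at h
    linarith
  have hNi : wee * Fi - wie * Fe < 0 := by
    have hb3 : wee / wie < Fe / Fi := lt_trans hbal₂ hbal₁
    have h := mul_lt_mul_of_pos_right hb3 (mul_pos hFi hwie)
    have e1 : wee / wie * (Fi * wie) = wee * Fi := by field_simp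
    have e2 : Fe / Fi * (Fi * wie) = Fe * wie := by field_simp
    rw [e1, e2] at h
    linarith
  have hAfac : 0 < cout * (cout * (1 + cin) + 2 * cin) := by nlinarith
  have hBfac : cout * (2 * cin - cout * (1 + cin)) < 0 := by nlinarith
  have hD2 : 0 < cout ^ 2 * (1 - cin ^ 2) := by nlinarith
  have hDD : 0 < (wee * wii - wei * wie) * (cout ^ 2 * (1 - cin ^ 2)) :=
    mul_pos hdet hD2
  have hN1 : 0 < -(cout * (cout * (1 + cin) + 2 * cin)) * (wii * Fe - wei * Fi) := by
    nlinarith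
  have hN2 : 0 < -(cout * (cout * (1 + cin) + 2 * cin)) * (wee * Fi - wie * Fe) := by
    nlinarith
  have hN3 : 0 < (cout * (2 * cin - cout * (1 + cin))) * (wii * Fe - wei * Fi) := by
    nlinarith
  have hN4 : 0 < (cout * (2 * cin - cout * (1 + cin))) * (wee * Fi - wie * Fe) := by
    nlinarith
  -- the explicit solution
  set r₀ : Fin 2 ⊕ Fin 2 → ℝ := Sum.elim
    ![(-(cout * (cout * (1 + cin) + 2 * cin)) * (wii * Fe - wei * Fi)) /
        ((wee * wii - wei * wie) * (cout ^ 2 * (1 - cin ^ 2))),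
      (-(cout * (cout * (1 + cin) + 2 * cin)) * (wee * Fi - wie * Fe)) /
        ((wee * wii - wei * wie) * (cout ^ 2 * (1 - cin ^ 2)))]
    ![((cout * (2 * cin - cout * (1 + cin))) * (wii * Fe - wei * Fi)) /
        ((wee * wii - wei * wie) * (cout ^ 2 * (1 - cin ^ 2))),
      ((cout * (2 * cin - cout * (1 + cin))) * (wee * Fi - wie * Fe)) /
        ((wee * wii - wei * wie) * (cout ^ 2 * (1 - cin ^ 2)))] with hr₀
  -- every solution has the explicit scaled components
  have key : ∀ r : Fin 2 ⊕ Fin 2 → ℝ,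
      ((1 / 2 : ℝ) • Matrix.fromBlocks
        ((1 - cin) • !![wee, wei; wie, wii]) ((1 - cin) • !![wee, wei; wie, wii])
        (((1 + cin) * (1 - cout)) • !![wee, wei; wie, wii])
        (((1 + cin) * (1 + cout)) • !![wee, wei; wie, wii])).mulVec r +
        Sum.elim ![Fe, Fi] ![Fe, Fi] = 0 → r = r₀ := by
    intro r h
    have E1 := congrFun h (Sum.inl 0)
    have E2 := congrFun h (Sum.inl 1)
    have E3 := congrFun h (Sum.inr 0)
    have E4 := congrFun h (Sum.inr 1)
    simp [Matrix.mulVec, Matrix.fromBlocks, Fintype.sum_sum_type, Fin.sum_univ_two,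
      dotProduct] at E1 E2 E3 E4
    have hx1 : r (Sum.inl 0) * ((wee * wii - wei * wie) * (cout ^ 2 * (1 - cin ^ 2))) =
        -(cout * (cout * (1 + cin) + 2 * cin)) * (wii * Fe - wei * Fi) := by
      linear_combination (wii * (cout * (1 + cin) * (1 + cout))) * E1 -
        (wei * (cout * (1 + cin) * (1 + cout))) * E2 -
        (wii * (cout * (1 - cin))) * E3 + (wei * (cout * (1 - cin))) * E4
    have hy1 : r (Sum.inl 1) * ((wee * wii - wei * wie) * (cout ^ 2 * (1 - cin ^ 2))) =
        -(cout * (cout * (1 + cin) + 2 * cin)) * (wee * Fi - wie * Fe) := by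
      linear_combination (wee * (cout * (1 + cin) * (1 + cout))) * E2 -
        (wie * (cout * (1 + cin) * (1 + cout))) * E1 -
        (wee * (cout * (1 - cin))) * E4 + (wie * (cout * (1 - cin))) * E3
    have hx2 : r (Sum.inr 0) * ((wee * wii - wei * wie) * (cout ^ 2 * (1 - cin ^ 2))) =
        (cout * (2 * cin - cout * (1 + cin))) * (wii * Fe - wei * Fi) := by
      linear_combination (-(wii * (cout * (1 + cin) * (1 - cout)))) * E1 +
        (wei * (cout * (1 + cin) * (1 - cout))) * E2 +
        (wii * (cout * (1 - cin))) * E3 - (wei * (cout * (1 - cin))) * E4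
    have hy2 : r (Sum.inr 1) * ((wee * wii - wei * wie) * (cout ^ 2 * (1 - cin ^ 2))) =
        (cout * (2 * cin - cout * (1 + cin))) * (wee * Fi - wie * Fe) := by
      linear_combination (-(wee * (cout * (1 + cin) * (1 - cout)))) * E2 +
        (wie * (cout * (1 + cin) * (1 - cout))) * E1 +
        (wee * (cout * (1 - cin))) * E4 - (wie * (cout * (1 - cin))) * E3
    funext j
    rcases j with i | i <;> fin_cases i <;> simp [hr₀] <;>
      rw [eq_div_iff (ne_of_gt hDD)]
    · linear_combination hx1
    · linear_combination hy1
    · linear_combination hx2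
    · linear_combination hy2
  -- r₀ is a solution
  have hsat : ((1 / 2 : ℝ) • Matrix.fromBlocks
        ((1 - cin) • !![wee, wei; wie, wii]) ((1 - cin) • !![wee, wei; wie, wii])
        (((1 + cin) * (1 - cout)) • !![wee, wei; wie, wii])
        (((1 + cin) * (1 + cout)) • !![wee, wei; wie, wii])).mulVec r₀ +
        Sum.elim ![Fe, Fi] ![Fe, Fi] = 0 := by
    have hc0 : cout ≠ 0 := ne_of_gt hcout0
    have hci : 1 - cin ^ 2 ≠ 0 := by nlinarith
    have hdt : wee * wii - wei * wie ≠ 0 := ne_of_gt hdet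
    have hdx : cin ^ 2 * wie * wei - cin ^ 2 * wii * wee - wie * wei + wii * wee ≠ 0 := by
      have : cin ^ 2 * wie * wei - cin ^ 2 * wii * wee - wie * wei + wii * wee =
        (wee * wii - wei * wie) * (1 - cin ^ 2) := by ring
      rw [this]; exact mul_ne_zero hdt hci
    have hdy : -(wie * wei) + wii * wee ≠ 0 := by
      have : -(wie * wei) + wii * wee = wee * wii - wei * wie := by ring
      rw [this]; exact hdt
    funext j
    rcases j with i | i <;> fin_cases i <;>
      simp [hr₀, Matrix.mulVec, Matrix.fromBlocks, Fintype.sum_sum_type,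
        Fin.sum_univ_two, dotProduct] <;>
      field_simp <;> ring_nf <;> field_simp <;> ring
  refine ⟨⟨r₀, hsat, fun y hy => key y hy⟩, ?_⟩
  intro r hr i
  rw [key r hr]
  rcases i with i | i <;> fin_cases i <;> simp [hr₀] <;>
    exact div_pos (by linarith [hN1, hN2, hN3, hN4]) hDD
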